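/- Let X = [x_1 ⋯ x_N] ∈ ℝ^{D×N} be a data matrix with rank(X) ≥ d. For each i = 1,…,N let i_1,…,i_k be indices in {1,…,N}\{i} and let w^{(i)} ∈ ℝ^k be a weight vector with ∑_{j=1}^k w_j^{(i)} = 1, and assume the exact reconstruction relations x_i = ∑_{j=1}^k w_j^{(i)} x_{i_j} hold for all i. Let u_1,…,u_d ∈ ℝ^D be orthonormal eigenvectors of X Xᵀ with corresponding eigenvalues λ_1,…,λ_d all positive, and let A = diag(λ_1^{-1/2},…,λ_d^{-1/2}) · [u_1 ⋯ u_d]ᵀ ∈ ℝ^{d×D}. Then Y := A X ∈ ℝ^{d×N} satisfies Y Yᵀ = I_d, the cost ∑_{i=1}^N ‖y_i − ∑_{j=1}^k w_j^{(i)} y_{i_j}‖² equals 0 (where y_i denotes the i-th column of Y), and consequently Y is a global minimizer of this cost over all Y' ∈ ℝ^{d×N} with Y' Y'ᵀ = I_d. -/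

import Mathlib

open Matrix BigOperators

/-- Under exact reconstruction relations and `rank X ≥ d`, the matrix
`Y = A X` (with `A = diag(λ_ℓ^{-1/2}) ⬝ [u_1 ⋯ u_d]ᵀ` built from orthonormal eigenvectors
of `X Xᵀ` with positive eigenvalues) satisfies `Y Yᵀ = I`, has zero LLE cost, and is a
global minimizer of the LLE cost over all `Y'` with `Y' Y'ᵀ = I`. -/
theorem lle_projection_pattern {D N d k : ℕ}
    (X : Matrix (Fin D) (Fin N) ℝ) (hrank : d ≤ X.rank)
    (nbr : Fin N → Fin k → Fin N) (hnbr : ∀ i j, nbr i j ≠ i)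
    (w : Fin N → Fin k → ℝ) (hw : ∀ i, ∑ j, w i j = 1)
    (hrec : ∀ i r, X r i = ∑ j, w i j * X r (nbr i j))
    (u : Fin d → Fin D → ℝ)
    (horth : ∀ ℓ m, u ℓ ⬝ᵥ u m = if ℓ = m then (1 : ℝ) else 0)
    (lam : Fin d → ℝ) (hlam : ∀ ℓ, 0 < lam ℓ)
    (heig : ∀ ℓ, (X * Xᵀ) *ᵥ u ℓ = lam ℓ • u ℓ)
    (A : Matrix (Fin d) (Fin D) ℝ)
    (hA : A = Matrix.diagonal (fun ℓ => (Real.sqrt (lam ℓ))⁻¹) * Matrix.of (fun ℓ r => u ℓ r))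
    (Y : Matrix (Fin d) (Fin N) ℝ) (hY : Y = A * X) :
    Y * Yᵀ = 1 ∧
    (∑ i, ∑ r, (Y r i - ∑ j, w i j * Y r (nbr i j)) ^ 2) = 0 ∧
    ∀ Y' : Matrix (Fin d) (Fin N) ℝ, Y' * Y'ᵀ = 1 →
      (∑ i, ∑ r, (Y r i - ∑ j, w i j * Y r (nbr i j)) ^ 2) ≤
        (∑ i, ∑ r, (Y' r i - ∑ j, w i j * Y' r (nbr i j)) ^ 2) := by
  have hA' : ∀ ℓ s, A ℓ s = (Real.sqrt (lam ℓ))⁻¹ * u ℓ s := by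
    intro ℓ s
    simp [hA, Matrix.mul_apply, Matrix.diagonal_apply, Finset.sum_ite_eq]
  have hcost : (∑ i, ∑ r, (Y r i - ∑ j, w i j * Y r (nbr i j)) ^ 2) = 0 := by
    have hYrec : ∀ i r, Y r i = ∑ j, w i j * Y r (nbr i j) := by
      intro i r
      simp only [hY, Matrix.mul_apply]
      calc ∑ s, A r s * X s i
          = ∑ s, ∑ j, w i j * (A r s * X s (nbr i j)) := by
            refine Finset.sum_congr rfl fun s _ => ?_
            rw [hrec i s, Finset.mul_sum]
            exact Finset.sum_congr rfl fun j _ => by ring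
        _ = ∑ j, w i j * ∑ s, A r s * X s (nbr i j) := by
            rw [Finset.sum_comm]
            exact Finset.sum_congr rfl fun j _ => by rw [Finset.mul_sum]
    apply Finset.sum_eq_zero
    intro i _
    apply Finset.sum_eq_zero
    intro r _
    rw [← hYrec i r]
    ring
  have hYY : Y * Yᵀ = 1 := by
    ext ℓ m
    have hmul : (Y * Yᵀ) ℓ m = (A * ((X * Xᵀ) * Aᵀ)) ℓ m := by
      rw [hY]
      rw [Matrix.transpose_mul, ← Matrix.mul_assoc, Matrix.mul_assoc A X,
        Matrix.mul_assoc X, ← Matrix.mul_assoc X Xᵀ, Matrix.mul_assoc A]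
    rw [hmul]
    have h2 : ∀ s, ((X * Xᵀ) * Aᵀ) s m = (Real.sqrt (lam m))⁻¹ * (lam m * u m s) := by
      intro s
      have := congrFun (heig m) s
      simp only [Matrix.mulVec, dotProduct, Pi.smul_apply, smul_eq_mul] at this
      simp only [Matrix.mul_apply, Matrix.transpose_apply, hA']
      calc ∑ t, (X * Xᵀ) s t * ((Real.sqrt (lam m))⁻¹ * u m t)
          = (Real.sqrt (lam m))⁻¹ * ∑ t, (X * Xᵀ) s t * u m t := by
            rw [Finset.mul_sum]; exact Finset.sum_congr rfl fun t _ => by ring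
        _ = (Real.sqrt (lam m))⁻¹ * (lam m * u m s) := by rw [this]
    simp only [Matrix.mul_apply, h2, hA']
    have : ∑ s, (Real.sqrt (lam ℓ))⁻¹ * u ℓ s * ((Real.sqrt (lam m))⁻¹ * (lam m * u m s))
        = (Real.sqrt (lam ℓ))⁻¹ * ((Real.sqrt (lam m))⁻¹ * (lam m * (u ℓ ⬝ᵥ u m))) := by
      simp only [dotProduct, Finset.mul_sum]
      exact Finset.sum_congr rfl fun s _ => by ring
    rw [this, horth]
    rcases eq_or_ne ℓ m with rfl | hne
    · have hs : Real.sqrt (lam ℓ) * Real.sqrt (lam ℓ) = lam ℓ :=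
        Real.mul_self_sqrt (hlam ℓ).le
      have hs0 : Real.sqrt (lam ℓ) ≠ 0 := ne_of_gt (Real.sqrt_pos.mpr (hlam ℓ))
      simp only [if_pos rfl, Matrix.one_apply_eq, mul_one]
      field_simp
      rw [if_pos trivial, mul_one, sq, hs]
    · simp [hne, Matrix.one_apply_ne hne]
  refine ⟨hYY, hcost, fun Y' _ => ?_⟩
  rw [hcost]
  positivity
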